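/- In the general demand oligopoly with N ≥ 2 sellers and T ≥ 1, assume a := Σ_{i≥N} q_i > 0. Then for every x ∈ [0,1] the following indifference identity holds: q₀·δ·V(N,T−1) + Σ_{i=1}^{N−1} q_i·(Z_{i−1,N}(x)·G(x) + (1 − Z_{i−1,N}(x))·δ·V(N−i, T−1)) + a·G(x) = V(N,T). In particular, when all N−1 opponents play the symmetric mixed strategy with distribution function G⁻¹, a seller's expected profit from posting any price p in the support equals V(N,T). -/

import Mathlib

/-- General demand oligopoly indifference identity: for every `x ∈ [0,1]`,
`q₀ δ V(N,T-1) + Σ_{i=1}^{N-1} qᵢ (Z_{i-1,N}(x) G(x) + (1 - Z_{i-1,N}(x)) δ V(N-i,T-1))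
  + a G(x) = V(N,T)`, where `a = Σ_{i≥N} qᵢ`; so posting any price in the support of the
symmetric mixed strategy yields expected profit `V(N,T)`. -/
theorem stmt17 (q : ℕ → ℝ) (δ pbar : ℝ)
    (hqnn : ∀ i, 0 ≤ q i) (hqsummable : Summable q) (hqsum : ∑' i, q i = 1)
    (hq0 : q 0 < 1) (hδ0 : 0 < δ) (hδ1 : δ ≤ 1) (hpbar : 0 < pbar)
    (V : ℕ → ℕ → ℝ)
    (hV0 : ∀ M : ℕ, 1 ≤ M → V M 0 = 0)
    (hVrec : ∀ M T : ℕ, 1 ≤ M → 1 ≤ T →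
      V M T = ∑ i ∈ Finset.range M, q i * δ * V (M - i) (T - 1) + (∑' i, q (M + i)) * pbar)
    (N T : ℕ) (hN : 2 ≤ N) (hT : 1 ≤ T)
    (htail : 0 < ∑' i, q (N + i))
    (Z : ℕ → ℝ → ℝ)
    (hZ : ∀ (j : ℕ) (x : ℝ), Z j x =
      ∑ i ∈ Finset.range (j + 1), ((N - 1).choose i : ℝ) * (1 - x) ^ (N - 1 - i) * x ^ i)
    (G : ℝ → ℝ)
    (hG : ∀ x : ℝ, G x =
      ((∑' i, q (N + i)) * pbar +
        ∑ i ∈ Finset.Icc 1 (N - 1), q i * Z (i - 1) x * (δ * V (N - i) (T - 1))) /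
      ((∑' i, q (N + i)) + ∑ i ∈ Finset.Icc 1 (N - 1), q i * Z (i - 1) x)) :
    ∀ x ∈ Set.Icc (0 : ℝ) 1,
      q 0 * δ * V N (T - 1) +
        ∑ i ∈ Finset.Icc 1 (N - 1),
          q i * (Z (i - 1) x * G x + (1 - Z (i - 1) x) * (δ * V (N - i) (T - 1))) +
        (∑' i, q (N + i)) * G x = V N T := by
  intro x hx
  obtain ⟨hx0, hx1⟩ := hx
  set a := ∑' i, q (N + i) with ha
  -- Z nonneg on [0,1]
  have hZnn : ∀ j : ℕ, 0 ≤ Z j x := by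
    intro j
    rw [hZ]
    apply Finset.sum_nonneg
    intro i _
    exact mul_nonneg (mul_nonneg (Nat.cast_nonneg _) (pow_nonneg (by linarith) _)) (pow_nonneg hx0 _)
  set S1 := ∑ i ∈ Finset.Icc 1 (N - 1), q i * Z (i - 1) x with hS1
  set S2 := ∑ i ∈ Finset.Icc 1 (N - 1), q i * Z (i - 1) x * (δ * V (N - i) (T - 1)) with hS2
  set S3 := ∑ i ∈ Finset.Icc 1 (N - 1), q i * (δ * V (N - i) (T - 1)) with hS3
  have hS1nn : 0 ≤ S1 := Finset.sum_nonneg fun i _ => mul_nonneg (hqnn i) (hZnn _)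
  have hD : 0 < a + S1 := lt_of_lt_of_le htail (le_add_of_nonneg_right hS1nn)
  have hkey : G x * (a + S1) = a * pbar + S2 := by
    rw [hG, ← hS1, ← hS2, div_mul_cancel₀ _ hD.ne']
  have hsplit : (∑ i ∈ Finset.Icc 1 (N - 1),
      q i * (Z (i - 1) x * G x + (1 - Z (i - 1) x) * (δ * V (N - i) (T - 1))))
      = S1 * G x + S3 - S2 := by
    rw [hS1, hS2, hS3, Finset.sum_mul, ← Finset.sum_add_distrib, ← Finset.sum_sub_distrib]
    apply Finset.sum_congr rfl
    intro i _
    ring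
  have hrange : Finset.range N = insert 0 (Finset.Icc 1 (N - 1)) := by
    ext i
    simp only [Finset.mem_range, Finset.mem_insert, Finset.mem_Icc]
    omega
  have hVN : V N T = q 0 * δ * V N (T - 1) + S3 + a * pbar := by
    rw [hVrec N T (by omega) hT, hrange, Finset.sum_insert (by simp)]
    simp only [Nat.sub_zero]
    rw [hS3]
    congr 1
    congr 1
    apply Finset.sum_congr rfl
    intro i _
    ring
  rw [hsplit, hVN]
  linarith [hkey]
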